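/- Stiction/noisy-composition Zames–Falb ρ-hard IQC with a general nonnegative filter (Corollary 19, time domain). Let n ∈ ℕ and let g : ℝⁿ → ℝ be an admissible potential with gradient ∇g. Let ρ ∈ (0,1] and δ ∈ [0,1), and let h : ℕ → ℝ satisfy h_k ≥ 0 for all k and ∑_{k=0}^{∞} ρ^{−2k} h_k ≤ (1−δ)/(1+δ) (the series being summable). Let (δ_k) be any real sequence with |δ_k| ≤ δ for all k, let y : ℕ → ℝⁿ be any sequence, and set u_k = (1 + δ_k)·∇g(y_k). Then for every T ∈ ℕ: ∑_{k=0}^{T} ρ^{−2k} ⟨u_k, y_k − ∑_{j=0}^{k} h_j·y_{k−j}⟩ ≥ 0. -/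

import Mathlib

open scoped RealInnerProductSpace

lemma grad_ineq12 {n : ℕ} (g : EuclideanSpace ℝ (Fin n) → ℝ)
    (hconv : ConvexOn ℝ Set.univ g) (hdiff : Differentiable ℝ g)
    (a b : EuclideanSpace ℝ (Fin n)) :
    g a + ⟪gradient g a, b - a⟫ ≤ g b := by
  have hfd : HasFDerivAt g ((InnerProductSpace.toDual ℝ _) (gradient g a)) a :=
    hasGradientAt_iff_hasFDerivAt.mp (hdiff a).hasGradientAt
  have hc : HasDerivAt (fun t : ℝ => a + t • (b - a)) (b - a) 0 := by
    simpa using ((hasDerivAt_id (0:ℝ)).smul_const (b - a)).const_add a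
  have hφ : HasDerivAt (fun t : ℝ => g (a + t • (b - a))) ⟪gradient g a, b - a⟫ 0 := by
    have h0 : HasFDerivAt g ((InnerProductSpace.toDual ℝ _) (gradient g a))
        ((fun t : ℝ => a + t • (b - a)) 0) := by simpa using hfd
    exact h0.comp_hasDerivAt 0 hc
  have hφconv : ConvexOn ℝ Set.univ (fun t : ℝ => g (a + t • (b - a))) := by
    have := hconv.comp_affineMap (AffineMap.lineMap a b)
    simp only [Set.preimage_univ] at this
    have e : (fun t : ℝ => g (a + t • (b - a))) = g ∘ AffineMap.lineMap a b := by
      funext t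
      simp [AffineMap.lineMap_apply, add_comm]
    rw [e]
    exact this
  have := hφconv.le_slope_of_hasDerivAt (Set.mem_univ (0:ℝ)) (Set.mem_univ (1:ℝ)) zero_lt_one hφ
  rw [slope_def_field] at this
  simp only [zero_smul, add_zero, one_smul, add_sub_cancel, sub_zero, div_one] at this
  linarith

/-- Corollary 19 (time domain): the Zames–Falb ρ-hard IQC for the composition of a
monotone gradient nonlinearity with a multiplicative perturbation of relative error
`δ`, with nonnegative filter satisfying `∑ ρ⁻²ᵏ hₖ ≤ (1-δ)/(1+δ)`. -/
theorem stmt_12 {n : ℕ} (g : EuclideanSpace ℝ (Fin n) → ℝ)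
    (hconv : ConvexOn ℝ Set.univ g) (hdiff : Differentiable ℝ g)
    (hnonneg : ∀ x, 0 ≤ g x) (hg0 : g 0 = 0)
    (ρ : ℝ) (hρ : ρ ∈ Set.Ioc (0 : ℝ) 1)
    (δ : ℝ) (hδ : δ ∈ Set.Ico (0 : ℝ) 1)
    (h : ℕ → ℝ) (hpos : ∀ k, 0 ≤ h k)
    (hsum : Summable (fun k : ℕ => ρ ^ (-(2 * (k : ℤ))) * h k))
    (hsum1 : ∑' k : ℕ, ρ ^ (-(2 * (k : ℤ))) * h k ≤ (1 - δ) / (1 + δ))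
    (δseq : ℕ → ℝ) (hδseq : ∀ k, |δseq k| ≤ δ)
    (y : ℕ → EuclideanSpace ℝ (Fin n)) (u : ℕ → EuclideanSpace ℝ (Fin n))
    (hu : ∀ k, u k = (1 + δseq k) • gradient g (y k)) :
    ∀ T : ℕ, 0 ≤ ∑ k ∈ Finset.range (T + 1),
      ρ ^ (-(2 * (k : ℤ))) *
        ⟪u k, y k - ∑ j ∈ Finset.range (k + 1), h j • y (k - j)⟫ := by
  obtain ⟨hρ0, hρ1⟩ := hρ
  obtain ⟨hδ0, hδ1⟩ := hδ
  intro T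
  set c : ℕ → ℝ := fun k => ρ ^ (-(2 * (k : ℤ))) with hcdef
  have hcpos : ∀ k, 0 < c k := fun k => zpow_pos hρ0 _
  have hc1 : ∀ k, 1 ≤ c k := by
    intro k
    have : c k = (ρ ^ (2 * k))⁻¹ := by
      show ρ ^ (-(2 * (k : ℤ))) = (ρ ^ (2 * k))⁻¹
      rw [zpow_neg, ← zpow_natCast]
      norm_num
    rw [this]
    exact (one_le_inv₀ (pow_pos hρ0 _)).mpr (pow_le_one₀ hρ0.le hρ1)
  have hcadd : ∀ j i, c (j + i) = c j * c i := by
    intro j i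
    simp only [hcdef]
    rw [← zpow_add₀ (ne_of_gt hρ0)]
    congr 1
    push_cast
    ring
  -- convexity consequences
  have key : ∀ a b, g a - g b ≤ ⟪gradient g a, a - b⟫ := by
    intro a b
    have h1 := grad_ineq12 g hconv hdiff a b
    have h2 : ⟪gradient g a, a - b⟫ = - ⟪gradient g a, b - a⟫ := by
      rw [← inner_neg_right]; congr 1; abel
    rw [h2]; linarith
  have hPk : ∀ k, g (y k) ≤ ⟪gradient g (y k), y k⟫ := by
    intro k
    have := key (y k) 0
    simpa [hg0] using this
  -- notation
  set G : ℕ → ℝ := fun k => g (y k) with hGdef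
  set Cv : ℕ → ℝ := fun k => ∑ j ∈ Finset.range (k + 1), h j * G (k - j) with hCvdef
  have hGpos : ∀ k, 0 ≤ G k := fun k => hnonneg (y k)
  have hCvpos : ∀ k, 0 ≤ Cv k := fun k =>
    Finset.sum_nonneg fun j _ => mul_nonneg (hpos j) (hGpos _)
  -- filter partial sums bound
  have hratio_lt : (1 - δ) / (1 + δ) ≤ 1 := by
    rw [div_le_one (by linarith)]; linarith
  have hpart : ∀ s : Finset ℕ, ∑ j ∈ s, c j * h j ≤ (1 - δ) / (1 + δ) := by
    intro s
    refine le_trans (Summable.sum_le_tsum s (fun j _ => mul_nonneg (hcpos j).le (hpos j)) hsum) hsum1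
  have hHk : ∀ k, ∑ j ∈ Finset.range (k + 1), h j ≤ 1 := by
    intro k
    refine le_trans (le_trans (Finset.sum_le_sum fun j _ => ?_) (hpart (Finset.range (k+1)))) hratio_lt
    nlinarith [hc1 j, hpos j]
  -- per-index bound on the bare inner product
  have hAk : ∀ k, G k - Cv k ≤
      ⟪gradient g (y k), y k - ∑ j ∈ Finset.range (k + 1), h j • y (k - j)⟫ := by
    intro k
    set P : ℝ := ⟪gradient g (y k), y k⟫ with hPdef
    have hexp : ⟪gradient g (y k), y k - ∑ j ∈ Finset.range (k + 1), h j • y (k - j)⟫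
        = P - ∑ j ∈ Finset.range (k + 1), h j * ⟪gradient g (y k), y (k - j)⟫ := by
      rw [inner_sub_right, inner_sum]
      simp only [real_inner_smul_right]
      rfl
    rw [hexp]
    have hsle : ∑ j ∈ Finset.range (k + 1), h j * ⟪gradient g (y k), y (k - j)⟫
        ≤ ∑ j ∈ Finset.range (k + 1), h j * (P - G k + G (k - j)) := by
      refine Finset.sum_le_sum fun j _ => mul_le_mul_of_nonneg_left ?_ (hpos j)
      have h1 := key (y k) (y (k - j))
      have h2 : ⟪gradient g (y k), y k - y (k - j)⟫
          = P - ⟪gradient g (y k), y (k - j)⟫ := by rw [inner_sub_right]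
      rw [h2] at h1
      simp only [hGdef]
      linarith
    have hsplit : ∑ j ∈ Finset.range (k + 1), h j * (P - G k + G (k - j))
        = (∑ j ∈ Finset.range (k + 1), h j) * (P - G k) + Cv k := by
      rw [hCvdef, Finset.sum_mul, ← Finset.sum_add_distrib]
      exact Finset.sum_congr rfl fun j _ => by ring
    have hS := le_trans hsle (le_of_eq hsplit)
    have h1mH : 0 ≤ 1 - ∑ j ∈ Finset.range (k + 1), h j := by linarith [hHk k]
    have hPG : 0 ≤ P - G k := by
      have := hPk k; simp only [hGdef, hPdef]; linarith
    nlinarith [mul_nonneg h1mH hPG]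
  -- per-index bound including the multiplicative perturbation
  have hterm : ∀ k, (1 - δ) * G k - (1 + δ) * Cv k ≤
      ⟪u k, y k - ∑ j ∈ Finset.range (k + 1), h j • y (k - j)⟫ := by
    intro k
    rw [hu k, real_inner_smul_left]
    have hA := hAk k
    have habs := abs_le.mp (hδseq k)
    have hmul := mul_le_mul_of_nonneg_left hA (show (0:ℝ) ≤ 1 + δseq k by linarith)
    nlinarith [mul_nonneg (show (0:ℝ) ≤ δseq k + δ by linarith) (hGpos k),
      mul_nonneg (show (0:ℝ) ≤ δ - δseq k by linarith) (hCvpos k)]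
  -- total sums
  set Stot : ℝ := ∑ i ∈ Finset.range (T + 1), c i * G i with hSdef
  have hSpos : 0 ≤ Stot :=
    Finset.sum_nonneg fun i _ => mul_nonneg (hcpos i).le (hGpos i)
  set D : ℝ := ∑ k ∈ Finset.range (T + 1), c k * Cv k with hDdef
  -- convolution double-sum bound
  have hD : D ≤ (1 - δ) / (1 + δ) * Stot := by
    have hD1 : D = ∑ j ∈ Finset.range (T + 1), ∑ k ∈ Finset.Icc j T,
        c k * (h j * G (k - j)) := by
      rw [hDdef]
      rw [show (∑ k ∈ Finset.range (T + 1), c k * Cv k)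
          = ∑ k ∈ Finset.range (T + 1), ∑ j ∈ Finset.range (k + 1),
            c k * (h j * G (k - j)) from
        Finset.sum_congr rfl fun k _ => by rw [hCvdef, Finset.mul_sum]]
      refine Finset.sum_comm' ?_
      intro k j
      simp only [Finset.mem_range, Finset.mem_Icc]
      omega
    have hD2 : D = ∑ j ∈ Finset.range (T + 1), (c j * h j) *
        ∑ i ∈ Finset.range (T + 1 - j), c i * G i := by
      rw [hD1]
      refine Finset.sum_congr rfl fun j hj => ?_
      rw [show Finset.Icc j T = Finset.Ico j (T + 1) by rw [Finset.Ico_add_one_right_eq_Icc],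
        Finset.sum_Ico_eq_sum_range, Finset.mul_sum]
      refine Finset.sum_congr rfl fun i _ => ?_
      rw [hcadd j i, Nat.add_sub_cancel_left]
      ring
    rw [hD2]
    calc ∑ j ∈ Finset.range (T + 1), (c j * h j) *
          ∑ i ∈ Finset.range (T + 1 - j), c i * G i
        ≤ ∑ j ∈ Finset.range (T + 1), (c j * h j) * Stot := by
          refine Finset.sum_le_sum fun j _ => ?_
          refine mul_le_mul_of_nonneg_left ?_ (mul_nonneg (hcpos j).le (hpos j))
          refine Finset.sum_le_sum_of_subset_of_nonneg
            (Finset.range_subset_range.mpr (by omega))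
            (fun i _ _ => mul_nonneg (hcpos i).le (hGpos i))
      _ = (∑ j ∈ Finset.range (T + 1), c j * h j) * Stot := by
          rw [Finset.sum_mul]
      _ ≤ (1 - δ) / (1 + δ) * Stot :=
          mul_le_mul_of_nonneg_right (hpart _) hSpos
  have hDfinal : (1 + δ) * D ≤ (1 - δ) * Stot := by
    have := mul_le_mul_of_nonneg_left hD (show (0:ℝ) ≤ 1 + δ by linarith)
    calc (1 + δ) * D ≤ (1 + δ) * ((1 - δ) / (1 + δ) * Stot) := this
      _ = (1 - δ) * Stot := by
          field_simp
  -- assemble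
  have hlow : 0 ≤ ∑ k ∈ Finset.range (T + 1),
      c k * ((1 - δ) * G k - (1 + δ) * Cv k) := by
    have heq : ∑ k ∈ Finset.range (T + 1),
        c k * ((1 - δ) * G k - (1 + δ) * Cv k)
        = (1 - δ) * Stot - (1 + δ) * D := by
      rw [hSdef, hDdef, Finset.mul_sum, Finset.mul_sum, ← Finset.sum_sub_distrib]
      exact Finset.sum_congr rfl fun k _ => by ring
    rw [heq]
    linarith
  refine le_trans hlow (Finset.sum_le_sum fun k _ => ?_)
  exact mul_le_mul_of_nonneg_left (hterm k) (hcpos k).le
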